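/- A four-coin currency A = (1, a_1, a_2, a_3) is orderly if and only if it is totally orderly. -/
import Mathlib


/-- The largest coin of the currency with coins `a 0, …, a k` that is `≤ c`
(or `0` if there is none). -/
def bestCoin (a : ℕ → ℕ) (k : ℕ) (c : ℕ) : ℕ :=
  ((Finset.range (k + 1)).filter fun j => a j ≤ c).sup a

/-- The number of coins used by the greedy algorithm to pay the amount `c`,
using the currency with coins `a 0, …, a k`. -/
def grd (a : ℕ → ℕ) (k : ℕ) : ℕ → ℕ
  | 0 => 0
  | c + 1 =>
    if h : 1 ≤ bestCoin a k (c + 1) then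
      grd a k (c + 1 - bestCoin a k (c + 1)) + 1
    else 0
  decreasing_by omega

/-- The minimal number of coins needed to pay the amount `c`,
using the currency with coins `a 0, …, a k`. -/
noncomputable def opt (a : ℕ → ℕ) (k : ℕ) (c : ℕ) : ℕ :=
  sInf {n | ∃ x : Fin (k + 1) → ℕ, (∑ i, x i) = n ∧ (∑ i, x i * a i.1) = c}

/-- `a 0, …, a k` is a currency: it starts with the coin `1` and is strictly increasing. -/
def IsCurrency (a : ℕ → ℕ) (k : ℕ) : Prop :=
  a 0 = 1 ∧ ∀ i j : ℕ, i < j → j ≤ k → a i < a j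

/-- The currency with coins `a 0, …, a k` is orderly: the greedy payment is
optimal for every positive amount. -/
def Orderly (a : ℕ → ℕ) (k : ℕ) : Prop :=
  ∀ c : ℕ, 0 < c → opt a k c = grd a k c

/-- The set `𝒜(a) = ⋃_{m ≥ 1} {m·a − l : 0 ≤ l ≤ m}`. -/
def calA (a : ℕ) : Set ℕ :=
  {x | ∃ m l : ℕ, 1 ≤ m ∧ l ≤ m ∧ x = m * a - l}

-- basic bestCoin lemmas
theorem bestCoin_le (a : ℕ → ℕ) (k c : ℕ) : bestCoin a k c ≤ c :=
  Finset.sup_le fun j hj => (Finset.mem_filter.mp hj).2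

theorem le_bestCoin (a : ℕ → ℕ) {k c j : ℕ} (hj : j ≤ k) (h : a j ≤ c) :
    a j ≤ bestCoin a k c :=
  Finset.le_sup (Finset.mem_filter.mpr ⟨Finset.mem_range.mpr (by omega), h⟩)

theorem bestCoin_eq (a : ℕ → ℕ) {k c i : ℕ} (hi : i ≤ k) (hic : a i ≤ c)
    (hmax : ∀ j, j ≤ k → a j ≤ c → a j ≤ a i) : bestCoin a k c = a i := by
  refine le_antisymm (Finset.sup_le fun j hj => ?_) (le_bestCoin a hi hic)
  obtain ⟨hj1, hj2⟩ := Finset.mem_filter.mp hj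
  exact hmax j (by have := Finset.mem_range.mp hj1; omega) hj2

theorem bestCoin_pos (a : ℕ → ℕ) {k c : ℕ} (h0 : a 0 = 1) (hc : 1 ≤ c) :
    1 ≤ bestCoin a k c := h0 ▸ le_bestCoin a (Nat.zero_le k) (h0 ▸ hc)

theorem grd_eq (a : ℕ → ℕ) {k n : ℕ} (hn : 0 < n) (hb : 1 ≤ bestCoin a k n) :
    grd a k n = grd a k (n - bestCoin a k n) + 1 := by
  obtain ⟨m, rfl⟩ : ∃ m, n = m + 1 := ⟨n - 1, by omega⟩
  rw [grd, dif_pos hb]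

theorem grd_add_coin (a : ℕ → ℕ) {k m j : ℕ} (hj : 1 ≤ a j)
    (hb : bestCoin a k (m + a j) = a j) :
    grd a k (m + a j) = grd a k m + 1 := by
  rw [grd_eq a (by omega) (by rw [hb]; exact hj), hb, Nat.add_sub_cancel]

theorem opt_le (a : ℕ → ℕ) {k c n : ℕ} (x : Fin (k + 1) → ℕ)
    (h1 : (∑ i, x i) = n) (h2 : (∑ i, x i * a i.1) = c) : opt a k c ≤ n :=
  Nat.sInf_le ⟨x, h1, h2⟩

theorem opt_spec (a : ℕ → ℕ) (k c : ℕ) (h0 : a 0 = 1) :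
    ∃ x : Fin (k + 1) → ℕ, (∑ i, x i) = opt a k c ∧ (∑ i, x i * a i.1) = c := by
  have hne : {n | ∃ x : Fin (k + 1) → ℕ, (∑ i, x i) = n ∧ (∑ i, x i * a i.1) = c}.Nonempty := by
    refine ⟨c, fun i => if i = 0 then c else 0, ?_, ?_⟩
    · simp
    · simp [h0]
  exact Nat.sInf_mem hne

theorem opt_add_coin_le (a : ℕ → ℕ) {k c : ℕ} (j : ℕ) (hj : j ≤ k) (h0 : a 0 = 1) :
    opt a k (c + a j) ≤ opt a k c + 1 := by
  obtain ⟨x, hx1, hx2⟩ := opt_spec a k c h0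
  set j' : Fin (k + 1) := ⟨j, by omega⟩
  have esplit : ∀ f : Fin (k + 1) → ℕ,
      (∑ i, f i) = (∑ i ∈ Finset.univ.erase j', f i) + f j' :=
    fun f => (Finset.sum_erase_add _ _ (Finset.mem_univ _)).symm
  have eagree : ∀ g : Fin (k + 1) → ℕ,
      (∑ i ∈ Finset.univ.erase j', Function.update x j' (x j' + 1) i * g i)
        = ∑ i ∈ Finset.univ.erase j', x i * g i := by
    intro g
    refine Finset.sum_congr rfl fun i hi => ?_
    rw [Function.update_of_ne (Finset.ne_of_mem_erase hi)]
  refine opt_le a (Function.update x j' (x j' + 1)) ?_ ?_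
  · rw [esplit] at hx1
    rw [esplit]
    have := eagree (fun _ => 1)
    simp only [mul_one] at this
    rw [this, Function.update_self]
    omega
  · rw [esplit (fun i => x i * a i.1)] at hx2
    rw [esplit]
    rw [eagree, Function.update_self]
    have : (x j' + 1) * a j'.1 = x j' * a j'.1 + a j := by
      have : (j' : ℕ) = j := rfl
      rw [Nat.succ_mul, this]
    omega

theorem opt_le_grd (a : ℕ → ℕ) (k : ℕ) (h0 : a 0 = 1) (n : ℕ) : opt a k n ≤ grd a k n := by
  induction n using Nat.strong_induction_on with
  | _ n ih =>
    rcases Nat.eq_zero_or_pos n with rfl | hn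
    · have : grd a k 0 = 0 := by rw [grd]
      rw [this]
      exact opt_le a (fun _ => 0) (by simp) (by simp)
    · have hb := bestCoin_pos a (k := k) h0 hn
      have hble := bestCoin_le a k n
      rw [grd_eq a hn hb]
      -- bestCoin is one of the coins
      have hne : (Finset.filter (fun j => a j ≤ n) (Finset.range (k + 1))).Nonempty :=
        ⟨0, Finset.mem_filter.mpr ⟨Finset.mem_range.mpr (by omega), by omega⟩⟩
      obtain ⟨j, hjmem, hjeq⟩ := Finset.exists_mem_eq_sup _ hne a
      obtain ⟨hj1, hj2⟩ := Finset.mem_filter.mp hjmem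
      have hjk : j ≤ k := by have := Finset.mem_range.mp hj1; omega
      have key : opt a k n ≤ opt a k (n - bestCoin a k n) + 1 := by
        have := opt_add_coin_le a (c := n - bestCoin a k n) j hjk h0
        have heq : n - bestCoin a k n + a j = n := by
          rw [show bestCoin a k n = a j from hjeq] at hble ⊢
          omega
        rwa [heq] at this
      exact key.trans (by
        have := ih (n - bestCoin a k n) (by omega)
        omega)

theorem grd_le_rep (a : ℕ → ℕ) (k : ℕ)
    (hstep : ∀ m j, j ≤ k → grd a k (m + a j) ≤ grd a k m + 1) :
    ∀ N n, ∀ x : Fin (k + 1) → ℕ, (∑ i, x i) = N → (∑ i, x i * a i.1) = n →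
      grd a k n ≤ N := by
  intro N
  induction N with
  | zero =>
    intro n x hx1 hx2
    have hz : ∀ i, x i = 0 := by
      intro i
      by_contra h
      have : 1 ≤ ∑ i, x i := Finset.single_le_sum (f := x) (fun i _ => Nat.zero_le _)
        (Finset.mem_univ i) |>.trans' (by omega)
      omega
    have : n = 0 := by
      rw [← hx2]
      exact Finset.sum_eq_zero fun i _ => by rw [hz i]; ring
    rw [this, grd]
  | succ N ih =>
    intro n x hx1 hx2
    have hex : ∃ i, 0 < x i := by
      by_contra h
      push_neg at h
      have : ∀ i, x i = 0 := fun i => by have := h i; omega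
      simp [Finset.sum_congr rfl fun i _ => this i] at hx1
    obtain ⟨i, hi⟩ := hex
    set x' := Function.update x i (x i - 1) with hx'
    have esplit : ∀ f : Fin (k + 1) → ℕ,
        (∑ m, f m) = (∑ m ∈ Finset.univ.erase i, f m) + f i :=
      fun f => (Finset.sum_erase_add _ _ (Finset.mem_univ _)).symm
    have eagree : ∀ g : Fin (k + 1) → ℕ,
        (∑ m ∈ Finset.univ.erase i, x' m * g m)
          = ∑ m ∈ Finset.univ.erase i, x m * g m := by
      intro g
      refine Finset.sum_congr rfl fun m hm => ?_
      rw [hx', Function.update_of_ne (Finset.ne_of_mem_erase hm)]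
    have hs1 : (∑ m, x' m) = N := by
      rw [esplit] at hx1 ⊢
      have := eagree (fun _ => 1)
      simp only [mul_one] at this
      rw [this, hx', Function.update_self]
      omega
    have hs2 : (∑ m, x' m * a m.1) + a i.1 = n := by
      rw [esplit (fun m => x' m * a m.1)]
      rw [esplit (fun m => x m * a m.1)] at hx2
      rw [eagree, hx', Function.update_self]
      have : (x i - 1) * a i.1 + a i.1 = x i * a i.1 := by
        rw [Nat.sub_mul, one_mul]
        have : a i.1 ≤ x i * a i.1 := Nat.le_mul_of_pos_left _ hi
        omega
      omega
    calc grd a k n = grd a k ((∑ m, x' m * a m.1) + a i.1) := by rw [hs2]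
      _ ≤ grd a k (∑ m, x' m * a m.1) + 1 := hstep _ i.1 (by omega)
      _ ≤ N + 1 := by have := ih _ x' hs1 rfl; omega

theorem orderly_of_step (a : ℕ → ℕ) (k : ℕ) (h0 : a 0 = 1)
    (hstep : ∀ m j, j ≤ k → grd a k (m + a j) ≤ grd a k m + 1) :
    ∀ c : ℕ, 0 < c → opt a k c = grd a k c := by
  intro c _
  refine le_antisymm (opt_le_grd a k h0 c) ?_
  obtain ⟨x, hx1, hx2⟩ := opt_spec a k c h0
  exact grd_le_rep a k hstep _ c x hx1 hx2

section Specific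

variable {a : ℕ → ℕ} {b c d : ℕ}

theorem grd_of_ones (a : ℕ → ℕ) (k : ℕ) :
    ∀ n, (∀ m, 1 ≤ m → m ≤ n → bestCoin a k m = 1) → grd a k n = n := by
  intro n
  induction n with
  | zero => intro _; rw [grd]
  | succ n ih =>
    intro h
    rw [grd_eq a (by omega) (by rw [h (n+1) (by omega) le_rfl]), h (n+1) (by omega) le_rfl]
    rw [Nat.add_sub_cancel, ih (fun m h1 h2 => h m h1 (by omega))]

-- evaluation lemmas, k = 3
theorem best3_one (h0 : a 0 = 1) (h1 : a 1 = b) (h2 : a 2 = c) (h3 : a 3 = d)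
    (hbc : b ≤ c) (hcd : c ≤ d) {n : ℕ} (hn1 : 1 ≤ n) (hnb : n < b) : bestCoin a 3 n = 1 := by
  rw [← h0]
  refine bestCoin_eq a (by omega) (by omega) fun j hj hle => ?_
  interval_cases j <;> omega

theorem best3_b (h0 : a 0 = 1) (h1 : a 1 = b) (h2 : a 2 = c) (h3 : a 3 = d)
    (hb : 1 ≤ b) (hcd : c ≤ d) {n : ℕ} (hn1 : b ≤ n) (hnc : n < c) : bestCoin a 3 n = b := by
  rw [← h1]
  refine bestCoin_eq a (by omega) (by omega) fun j hj hle => ?_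
  interval_cases j <;> omega

theorem best3_c (h0 : a 0 = 1) (h1 : a 1 = b) (h2 : a 2 = c) (h3 : a 3 = d)
    (hb : 1 ≤ b) (hbc : b ≤ c) {n : ℕ} (hn1 : c ≤ n) (hnd : n < d) : bestCoin a 3 n = c := by
  rw [← h2]
  refine bestCoin_eq a (by omega) (by omega) fun j hj hle => ?_
  interval_cases j <;> omega

theorem best3_d (h0 : a 0 = 1) (h1 : a 1 = b) (h2 : a 2 = c) (h3 : a 3 = d)
    (hb : 1 ≤ b) (hbc : b ≤ c) (hcd : c ≤ d) {n : ℕ} (hn1 : d ≤ n) : bestCoin a 3 n = d := by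
  rw [← h3]
  refine bestCoin_eq a (by omega) (by omega) fun j hj hle => ?_
  interval_cases j <;> omega

-- evaluation lemmas, k = 2
theorem best2_one (h0 : a 0 = 1) (h1 : a 1 = b) (h2 : a 2 = c)
    (hbc : b ≤ c) {n : ℕ} (hn1 : 1 ≤ n) (hnb : n < b) : bestCoin a 2 n = 1 := by
  rw [← h0]
  refine bestCoin_eq a (by omega) (by omega) fun j hj hle => ?_
  interval_cases j <;> omega

theorem best2_b (h0 : a 0 = 1) (h1 : a 1 = b) (h2 : a 2 = c)
    (hb : 1 ≤ b) {n : ℕ} (hn1 : b ≤ n) (hnc : n < c) : bestCoin a 2 n = b := by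
  rw [← h1]
  refine bestCoin_eq a (by omega) (by omega) fun j hj hle => ?_
  interval_cases j <;> omega

theorem best2_c (h0 : a 0 = 1) (h1 : a 1 = b) (h2 : a 2 = c)
    (hb : 1 ≤ b) (hbc : b ≤ c) {n : ℕ} (hn1 : c ≤ n) : bestCoin a 2 n = c := by
  rw [← h2]
  refine bestCoin_eq a (by omega) (by omega) fun j hj hle => ?_
  interval_cases j <;> omega

-- evaluation lemmas, k = 1
theorem best1_one (h0 : a 0 = 1) (h1 : a 1 = b)
    {n : ℕ} (hn1 : 1 ≤ n) (hnb : n < b) : bestCoin a 1 n = 1 := by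
  have h : bestCoin a 1 n = a 0 := by
    refine bestCoin_eq a (by omega) (by omega) fun j hj hle => ?_
    interval_cases j <;> omega
  omega

theorem best1_b (h0 : a 0 = 1) (h1 : a 1 = b)
    (hb : 1 ≤ b) {n : ℕ} (hn1 : b ≤ n) : bestCoin a 1 n = b := by
  rw [← h1]
  refine bestCoin_eq a (by omega) (by omega) fun j hj hle => ?_
  interval_cases j <;> omega

theorem best0_one (h0 : a 0 = 1) {n : ℕ} (hn1 : 1 ≤ n) : bestCoin a 0 n = 1 := by
  rw [← h0]
  refine bestCoin_eq a (by omega) (by omega) fun j hj hle => ?_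
  interval_cases j <;> omega

end Specific

section Formulas

variable {a : ℕ → ℕ} {b c d : ℕ}

theorem grd1_formula (h0 : a 0 = 1) (h1 : a 1 = b) (hb : 1 < b) :
    ∀ u v, v < b → grd a 1 (u * b + v) = u + v := by
  intro u
  induction u with
  | zero =>
    intro v hv
    simp only [Nat.zero_mul, Nat.zero_add]
    exact grd_of_ones a 1 v fun m hm1 hm2 => best1_one h0 h1 hm1 (by omega)
  | succ u ih =>
    intro v hv
    have e : (u + 1) * b + v = (u * b + v) + b := by ring
    have step := grd_add_coin a (k := 1) (m := u * b + v) (j := 1) (by omega)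
      (by rw [h1]; exact best1_b h0 h1 (by omega) (by omega))
    rw [h1] at step
    rw [e, step, ih v hv]
    omega

theorem grd2_small (h0 : a 0 = 1) (h1 : a 1 = b) (h2 : a 2 = c) (hb : 1 < b) (hbc : b < c) :
    ∀ u v, v < b → u * b + v < c → grd a 2 (u * b + v) = u + v := by
  intro u
  induction u with
  | zero =>
    intro v hv _
    simp only [Nat.zero_mul, Nat.zero_add]
    exact grd_of_ones a 2 v fun m hm1 hm2 => best2_one h0 h1 h2 (by omega) hm1 (by omega)
  | succ u ih =>
    intro v hv hc
    have e : (u + 1) * b + v = (u * b + v) + b := by ring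
    have step := grd_add_coin a (k := 2) (m := u * b + v) (j := 1) (by omega)
      (by rw [h1]; exact best2_b h0 h1 h2 (by omega) (by omega) (by omega))
    rw [h1] at step
    rw [e, step, ih v hv (by omega)]
    omega

theorem grd2_formula (h0 : a 0 = 1) (h1 : a 1 = b) (h2 : a 2 = c) (hb : 1 < b) (hbc : b < c) :
    ∀ m u v, v < b → u * b + v < c → grd a 2 (m * c + (u * b + v)) = m + u + v := by
  intro m
  induction m with
  | zero =>
    intro u v hv hc
    simp only [Nat.zero_mul, Nat.zero_add]
    exact grd2_small h0 h1 h2 hb hbc u v hv hc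
  | succ m ih =>
    intro u v hv hc
    have e : (m + 1) * c + (u * b + v) = (m * c + (u * b + v)) + c := by ring
    have step := grd_add_coin a (k := 2) (m := m * c + (u * b + v)) (j := 2) (by omega)
      (by rw [h2]; exact best2_c h0 h1 h2 (by omega) (by omega) (by omega))
    rw [h2] at step
    rw [e, step, ih u v hv hc]
    omega

theorem grd3_small (h0 : a 0 = 1) (h1 : a 1 = b) (h2 : a 2 = c) (h3 : a 3 = d)
    (hb : 1 < b) (hbc : b < c) (hcd : c < d) :
    ∀ u v, v < b → u * b + v < c → grd a 3 (u * b + v) = u + v := by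
  intro u
  induction u with
  | zero =>
    intro v hv _
    simp only [Nat.zero_mul, Nat.zero_add]
    exact grd_of_ones a 3 v fun m hm1 hm2 =>
      best3_one h0 h1 h2 h3 (by omega) (by omega) hm1 (by omega)
  | succ u ih =>
    intro v hv hc
    have e : (u + 1) * b + v = (u * b + v) + b := by ring
    have step := grd_add_coin a (k := 3) (m := u * b + v) (j := 1) (by omega)
      (by rw [h1]; exact best3_b h0 h1 h2 h3 (by omega) (by omega) (by omega) (by omega))
    rw [h1] at step
    rw [e, step, ih v hv (by omega)]
    omega

end Formulas

theorem decompose (m b : ℕ) (hb : 0 < b) : ∃ u v, m = u * b + v ∧ v < b :=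
  ⟨m / b, m % b, by rw [Nat.mul_comm]; exact (Nat.div_add_mod m b).symm, Nat.mod_lt _ hb⟩

section Orderliness

variable {a : ℕ → ℕ} {b c d : ℕ}

theorem orderly0 (h0 : a 0 = 1) : ∀ c : ℕ, 0 < c → opt a 0 c = grd a 0 c := by
  refine orderly_of_step a 0 h0 fun m j hj => ?_
  have hj0 : j = 0 := by omega
  subst hj0
  have g : ∀ n, grd a 0 n = n := fun n => grd_of_ones a 0 n fun m h1 _ => best0_one h0 h1
  rw [h0, g, g]

theorem orderly1 (h0 : a 0 = 1) (h1 : a 1 = b) (hb : 1 < b) :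
    ∀ c : ℕ, 0 < c → opt a 1 c = grd a 1 c := by
  refine orderly_of_step a 1 h0 fun m j hj => ?_
  obtain ⟨u, v, rfl, hv⟩ := decompose m b (by omega)
  interval_cases j
  · -- coin 1
    rw [h0]
    by_cases hvb : v + 1 < b
    · have e : u * b + v + 1 = u * b + (v + 1) := by omega
      rw [e, grd1_formula h0 h1 hb u (v+1) hvb, grd1_formula h0 h1 hb u v hv]
      omega
    · have hveq : v + 1 = b := by omega
      have e : u * b + v + 1 = (u + 1) * b + 0 := by
        have : (u + 1) * b = u * b + b := by ring
        omega
      rw [e, grd1_formula h0 h1 hb (u+1) 0 (by omega), grd1_formula h0 h1 hb u v hv]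
      omega
  · -- coin b
    rw [h1]
    have e : u * b + v + b = (u + 1) * b + v := by ring
    rw [e, grd1_formula h0 h1 hb (u+1) v hv, grd1_formula h0 h1 hb u v hv]
    omega

theorem orderly2 (h0 : a 0 = 1) (h1 : a 1 = b) (h2 : a 2 = c) (hb : 1 < b) (hbc : b < c)
    {q s : ℕ} (hq : c + s = q * b) (hsb : s < b) (hq2 : 2 ≤ q) (hsq : s < q) :
    ∀ c : ℕ, 0 < c → opt a 2 c = grd a 2 c := by
  refine orderly_of_step a 2 h0 fun m j hj => ?_
  obtain ⟨m2, r, rfl, hr⟩ := decompose m c (by omega)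
  obtain ⟨u, v, rfl, hv⟩ := decompose r b (by omega)
  have F := grd2_formula h0 h1 h2 hb hbc
  interval_cases j
  · -- coin 1
    rw [h0]
    by_cases hrc : u * b + v + 1 = c
    · have e : m2 * c + (u * b + v) + 1 = (m2 + 1) * c + (0 * b + 0) := by
        have : (m2 + 1) * c = m2 * c + c := by ring
        omega
      rw [e, F (m2+1) 0 0 (by omega) (by omega), F m2 u v hv hr]
      omega
    · by_cases hvb : v + 1 < b
      · have e : m2 * c + (u * b + v) + 1 = m2 * c + (u * b + (v + 1)) := by omega
        rw [e, F m2 u (v+1) hvb (by omega), F m2 u v hv hr]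
        omega
      · have hveq : v + 1 = b := by omega
        have hub : (u + 1) * b = u * b + b := by ring
        have e : m2 * c + (u * b + v) + 1 = m2 * c + ((u + 1) * b + 0) := by omega
        rw [e, F m2 (u+1) 0 (by omega) (by omega), F m2 u v hv hr]
        omega
  · -- coin b
    rw [h1]
    have hub : (u + 1) * b = u * b + b := by ring
    by_cases hcc : (u + 1) * b + v < c
    · have e : m2 * c + (u * b + v) + b = m2 * c + ((u + 1) * b + v) := by omega
      rw [e, F m2 (u+1) v hv hcc, F m2 u v hv hr]
      omega
    · -- carry into c
      push_neg at hcc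
      set w := (u + 1) * b + v - c with hw
      have hwc : w + c = (u + 1) * b + v := by omega
      have hwb : w < b := by omega
      have key : w + q * b = u * b + b + v + s := by omega
      have hle1 : u + 1 ≤ q := by
        by_contra hcon
        push_neg at hcon
        have : (q + 1) * b ≤ (u + 1) * b := Nat.mul_le_mul_right b (by omega)
        have h1' : (q + 1) * b = q * b + b := by ring
        omega
      have hle2 : q ≤ u + 2 := by
        by_contra hcon
        push_neg at hcon
        have : (u + 3) * b ≤ q * b := Nat.mul_le_mul_right b (by omega)
        have h1' : (u + 3) * b = u * b + 3 * b := by ring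
        omega
      have hwuv : w ≤ u + v := by
        rcases (by omega : u + 1 = q ∨ u + 2 = q) with hcase | hcase
        · have : q * b = u * b + b := by rw [← hcase]; ring
          omega
        · have : q * b = u * b + 2 * b := by rw [← hcase]; ring
          omega
      have e : m2 * c + (u * b + v) + b = (m2 + 1) * c + (0 * b + w) := by
        have : (m2 + 1) * c = m2 * c + c := by ring
        omega
      rw [e, F (m2+1) 0 w hwb (by omega), F m2 u v hv hr]
      omega
  · -- coin c
    rw [h2]
    have e : m2 * c + (u * b + v) + c = (m2 + 1) * c + (u * b + v) := by ring
    rw [e, F (m2+1) u v hv hr, F m2 u v hv hr]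
    omega

end Orderliness

section Key

variable {a : ℕ → ℕ} {b c d : ℕ}

/-- If the three-coin prefix is "bad" (`q ≤ s`), the four-coin system is not orderly. -/
theorem not_orderly3 (h0 : a 0 = 1) (h1 : a 1 = b) (h2 : a 2 = c) (h3 : a 3 = d)
    (hb : 1 < b) (hbc : b < c) (hcd : c < d)
    {q s : ℕ} (hq : c + s = q * b) (hsb : s < b) (hq2 : 2 ≤ q) (hsq : q ≤ s)
    (hord : ∀ n : ℕ, 0 < n → opt a 3 n = grd a 3 n) : False := by
  set t := d - c with ht
  have htd : d = c + t := by omega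
  have htpos : 1 ≤ t := by omega
  by_cases hts : s < t
  · -- d > q*b : witness amount c + s
    have hbest : bestCoin a 3 (s + c) = c :=
      best3_c h0 h1 h2 h3 (by omega) (by omega) (by omega) (by omega)
    have hg : grd a 3 (s + c) = s + 1 := by
      have step := grd_add_coin a (k := 3) (m := s) (j := 2) (by omega)
        (by rw [h2]; exact hbest)
      rw [h2] at step
      have hs := grd3_small h0 h1 h2 h3 hb hbc hcd 0 s (by omega) (by omega)
      simp only [Nat.zero_mul, Nat.zero_add] at hs
      omega
    have hopt : opt a 3 (s + c) ≤ q := by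
      refine opt_le a ![0, q, 0, 0] ?_ ?_
      · simp [Fin.sum_univ_four]
      · simp [Fin.sum_univ_four, h1]
        omega
    have := hord (s + c) (by omega)
    omega
  · push_neg at hts  -- t ≤ s
    by_cases htb : t + 2 ≤ b
    · -- witness amount c + b
      have e : c + b = (b - t) + d := by omega
      have hbest : bestCoin a 3 ((b - t) + d) = d :=
        best3_d h0 h1 h2 h3 (by omega) (by omega) (by omega) (by omega)
      have hg : grd a 3 (c + b) = (b - t) + 1 := by
        have step := grd_add_coin a (k := 3) (m := b - t) (j := 3) (by omega)
          (by rw [h3]; exact hbest)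
        rw [h3] at step
        rw [e, step]
        have hs := grd3_small h0 h1 h2 h3 hb hbc hcd 0 (b - t) (by omega) (by omega)
        simp only [Nat.zero_mul, Nat.zero_add] at hs
        omega
      have hopt : opt a 3 (c + b) ≤ 2 := by
        refine opt_le a ![0, 1, 1, 0] ?_ ?_
        · simp [Fin.sum_univ_four]
        · simp [Fin.sum_univ_four, h1, h2]
          ring
      have := hord (c + b) (by omega)
      omega
    · -- t = s = b - 1, d = q*b : witness amount 2*c
      have hts' : t = b - 1 := by omega
      have hss : s = b - 1 := by omega
      have hb3 : 3 ≤ b := by omega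
      obtain ⟨q', rfl⟩ : ∃ q', q = q' + 2 := ⟨q - 2, by omega⟩
      have hqb : (q' + 2) * b = q' * b + 2 * b := by ring
      have hdq : d = (q' + 2) * b := by omega
      have e : 2 * c = (q' * b + 2) + d := by omega
      have hbest : bestCoin a 3 ((q' * b + 2) + d) = d :=
        best3_d h0 h1 h2 h3 (by omega) (by omega) (by omega) (by omega)
      have hg : grd a 3 (2 * c) = q' + 3 := by
        have step := grd_add_coin a (k := 3) (m := q' * b + 2) (j := 3) (by omega)
          (by rw [h3]; exact hbest)
        rw [h3] at step
        rw [e, step, grd3_small h0 h1 h2 h3 hb hbc hcd q' 2 (by omega) (by omega)]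
      have hopt : opt a 3 (2 * c) ≤ 2 := by
        refine opt_le a ![0, 0, 2, 0] ?_ ?_
        · simp [Fin.sum_univ_four]
        · simp [Fin.sum_univ_four, h2]

      have := hord (2 * c) (by omega)
      omega

end Key

/-- A four-coin currency `(1, a₁, a₂, a₃)` is orderly iff it is totally orderly,
i.e. all its prefix currencies are orderly. -/
theorem four_coin_orderly_iff_totally (a₁ a₂ a₃ : ℕ)
    (h1 : 1 < a₁) (h2 : a₁ < a₂) (h3 : a₂ < a₃) :
    Orderly (fun i => if i = 0 then 1 else if i = 1 then a₁
      else if i = 2 then a₂ else a₃) 3 ↔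
      ∀ l ≤ 3, Orderly (fun i => if i = 0 then 1 else if i = 1 then a₁
        else if i = 2 then a₂ else a₃) l := by
  set A : ℕ → ℕ := fun i => if i = 0 then 1 else if i = 1 then a₁
    else if i = 2 then a₂ else a₃ with hA
  have e0 : A 0 = 1 := rfl
  have e1 : A 1 = a₁ := rfl
  have e2 : A 2 = a₂ := rfl
  have e3 : A 3 = a₃ := rfl
  constructor
  · intro h l hl
    interval_cases l
    · exact orderly0 e0
    · exact orderly1 e0 e1 h1
    · -- the crucial case
      obtain ⟨q0, r, hqr, hrb⟩ := decompose a₂ a₁ (by omega)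
      have hq0 : q0 ≠ 0 := by
        rintro rfl
        simp at hqr
        omega
      by_cases hr : r = 0
      · subst hr
        have hq2 : 2 ≤ q0 := by
          rcases (by omega : q0 = 1 ∨ 2 ≤ q0) with h' | h'
          · rw [h', one_mul] at hqr; omega
          · exact h'
        exact orderly2 e0 e1 e2 h1 h2 (q := q0) (s := 0) (by omega) (by omega) hq2 (by omega)
      · have hmul : (q0 + 1) * a₁ = q0 * a₁ + a₁ := by ring
        have hq : a₂ + (a₁ - r) = (q0 + 1) * a₁ := by omega
        by_cases hsq : a₁ - r < q0 + 1
        · exact orderly2 e0 e1 e2 h1 h2 hq (by omega) (by omega) hsq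
        · exact absurd h (fun h' => not_orderly3 e0 e1 e2 e3 h1 h2 h3 hq (by omega)
            (by omega) (by omega) h')
    · exact h
  · intro h
    exact h 3 le_rfl
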